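/- Let R : [0,∞) → [0,∞) be a non-increasing function, and let η > 0 and C > 0 be constants such that for every t ≥ 0 the function R^{1+η} is integrable on [t,∞) and ∫_t^∞ R(τ)^{1+η} dτ ≤ (1/C)·R(0)^η·R(t). Then R(t) ≤ R(0)·((1+η)/(1+η·C·t))^{1/η} for all t ≥ 0. -/

import Mathlib

open MeasureTheory

lemma komornik_aux_exp (x : ℝ) (hx : 0 ≤ x) : Real.exp (-x) ≤ 1 - x + x^2/2 := by
  have hmono : MonotoneOn (fun y : ℝ => 1 - y + y^2/2 - Real.exp (-y)) (Set.Ici 0) := by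
    apply monotoneOn_of_deriv_nonneg (convex_Ici 0)
    · fun_prop
    · intro y hy
      apply DifferentiableAt.differentiableWithinAt
      fun_prop
    · intro y hy
      have hd : HasDerivAt (fun y : ℝ => 1 - y + y^2/2 - Real.exp (-y))
          (0 - 1 + (2 * y^1)/2 - Real.exp (-y) * (-1)) y := by
        exact (((hasDerivAt_const y (1:ℝ)).sub (hasDerivAt_id y)).add
          ((hasDerivAt_pow 2 y).div_const 2)).sub
          ((Real.hasDerivAt_exp (-y)).comp y ((hasDerivAt_id y).neg))
      rw [hd.deriv]
      have := Real.add_one_le_exp (-y)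
      have hy0 : 0 ≤ y := le_of_lt (by simpa using hy)
      simp only [pow_one]
      nlinarith
  have h0 := hmono (Set.mem_Ici.2 le_rfl) (Set.mem_Ici.2 hx) hx
  simp at h0
  nlinarith [h0]

lemma komornik_aux_log (u : ℝ) (hu : 0 ≤ u) : u - u^2 ≤ Real.log (1+u) := by
  have h1 : (0:ℝ) < 1 + u := by linarith
  have h2 := Real.log_le_sub_one_of_pos (x := (1+u)⁻¹) (by positivity)
  rw [Real.log_inv] at h2
  have h3 : (1+u)⁻¹ - 1 = -(u/(1+u)) := by field_simp; ring
  rw [h3] at h2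
  have h4 : u/(1+u) ≤ Real.log (1+u) := by linarith
  have h5 : u - u^2 ≤ u/(1+u) := by
    rw [le_div_iff₀ h1]; nlinarith
  linarith

lemma komornik_aux_bern (η u : ℝ) (hη : 0 < η) (hu : 0 ≤ u) :
    (1+u) ^ (-η) ≤ 1 - η*u + η*(1+η)*u^2 := by
  have h1 : (0:ℝ) < 1 + u := by linarith
  rw [Real.rpow_def_of_pos h1]
  set L := Real.log (1+u) with hL
  have hL0 : 0 ≤ L := Real.log_nonneg (by linarith)
  have hLle : L ≤ u := by
    have := Real.log_le_sub_one_of_pos h1; linarith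
  have hLge : u - u^2 ≤ L := komornik_aux_log u hu
  have he : Real.exp (L * (-η)) ≤ 1 - (η*L) + (η*L)^2/2 := by
    have := komornik_aux_exp (η*L) (by positivity)
    rw [show L * (-η) = -(η*L) by ring]
    exact this
  refine he.trans ?_
  have hL2 : L^2 ≤ u^2 := by nlinarith
  have e1 : η*(u-L) ≤ η*u^2 := mul_le_mul_of_nonneg_left (by linarith) hη.le
  have e2 : η^2*L^2 ≤ η^2*u^2 := mul_le_mul_of_nonneg_left hL2 (sq_nonneg η)
  nlinarith [e1, e2, sq_nonneg (η*u)]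

lemma komornik_step (η k Δ a b F0 : ℝ) (hη : 0 < η) (hk : 0 < k) (hΔ : 0 ≤ Δ)
    (hb : 0 < b) (hbF0 : b ≤ F0) (hab : b + k*Δ*b^(1+η) ≤ a) :
    η*k*Δ - η*(1+η)*k^2*F0^η*Δ^2 ≤ b^(-η) - a^(-η) := by
  set u : ℝ := k*Δ*b^η with hu
  have hbη : 0 < b^η := Real.rpow_pos_of_pos hb η
  have hunn : 0 ≤ u := by positivity
  have hbu : b*(1+u) ≤ a := by
    have e : b*(1+u) = b + k*Δ*b^(1+η) := by
      rw [hu]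
      have : b^(1+η) = b^(1:ℝ) * b^η := Real.rpow_add hb 1 η
      rw [this, Real.rpow_one]; ring
    rw [e]; exact hab
  have hbupos : 0 < b*(1+u) := by positivity
  have h4 : a^(-η) ≤ (b*(1+u))^(-η) :=
    Real.rpow_le_rpow_of_nonpos hbupos hbu (by linarith)
  have h5 : (b*(1+u))^(-η) = b^(-η) * (1+u)^(-η) :=
    Real.mul_rpow hb.le (by linarith)
  have h6 : (1+u)^(-η) ≤ 1 - η*u + η*(1+η)*u^2 := komornik_aux_bern η u hη hunn
  have hbnegpos : 0 < b^(-η) := Real.rpow_pos_of_pos hb _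
  have e1 : b^(-η) * b^η = 1 := by
    rw [← Real.rpow_add hb]; simp
  have hbF0η : b^η ≤ F0^η := Real.rpow_le_rpow hb.le hbF0 hη.le
  have hvi : a^(-η) ≤ b^(-η) * (1 - η*u + η*(1+η)*u^2) :=
    h4.trans (h5.le.trans (mul_le_mul_of_nonneg_left h6 hbnegpos.le))
  have e2 : b^(-η) * (1 - η*u + η*(1+η)*u^2)
      = b^(-η) - (η*k*Δ - η*(1+η)*k^2*Δ^2*b^η) := by
    rw [hu]; linear_combination (-(η*k*Δ) + η*(1+η)*k^2*Δ^2*b^η) * e1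
  have h8 : η*(1+η)*k^2*Δ^2*b^η ≤ η*(1+η)*k^2*F0^η*Δ^2 := by
    have := mul_le_mul_of_nonneg_left hbF0η (show (0:ℝ) ≤ η*(1+η)*k^2*Δ^2 by positivity)
    nlinarith [this]
  rw [e2] at hvi
  linarith

lemma komornik_core (F : ℝ → ℝ) (η k : ℝ) (hη : 0 < η) (hk : 0 < k)
    (hFnn : ∀ t, 0 ≤ t → 0 ≤ F t)
    (hstep : ∀ s t, 0 ≤ s → s ≤ t → F t + k*(t-s)*F t^(1+η) ≤ F s)
    (T : ℝ) (hT : 0 ≤ T) (hpos : 0 < F T) :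
    F 0 ^ (-η) + η*k*T ≤ F T ^ (-η) := by
  have hFanti : ∀ s t, 0 ≤ s → s ≤ t → F t ≤ F s := by
    intro s t hs hst
    have h1 := hstep s t hs hst
    have h2 : 0 ≤ k*(t-s)*F t^(1+η) :=
      mul_nonneg (mul_nonneg hk.le (by linarith)) (Real.rpow_nonneg (hFnn t (hs.trans hst)) _)
    linarith
  have hF0pos : 0 < F 0 := lt_of_lt_of_le hpos (hFanti 0 T le_rfl hT)
  have hMnn : 0 ≤ η*(1+η)*k^2*(F 0)^η := by
    have := Real.rpow_nonneg hF0pos.le η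
    positivity
  have key : ∀ n : ℕ, 1 ≤ n →
      F 0 ^ (-η) + η*k*T - (η*(1+η)*k^2*(F 0)^η)*T^2/n ≤ F T ^ (-η) := by
    intro n hn
    have hn0 : (0:ℝ) < n := by exact_mod_cast hn
    have hΔnn : 0 ≤ T / n := div_nonneg hT hn0.le
    have step : ∀ i ∈ Finset.range n,
        η*k*(T/n) - (η*(1+η)*k^2*(F 0)^η)*(T/n)^2 ≤
          (fun j : ℕ => F (j * (T/n)) ^ (-η)) (i+1) - (fun j : ℕ => F (j * (T/n)) ^ (-η)) i := by
      intro i hi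
      have hi' : (i:ℝ) + 1 ≤ n := by exact_mod_cast Finset.mem_range.1 hi
      have h0i : (0:ℝ) ≤ i * (T/n) := by positivity
      have hii : (i:ℝ) * (T/n) ≤ ((i:ℝ)+1) * (T/n) := by nlinarith
      have hiT : ((i:ℝ)+1) * (T/n) ≤ T := by
        calc ((i:ℝ)+1) * (T/n) ≤ n * (T/n) := mul_le_mul_of_nonneg_right hi' hΔnn
          _ = T := by field_simp
      have hbpos : 0 < F (((i:ℝ)+1) * (T/n)) :=
        lt_of_lt_of_le hpos (hFanti _ T (h0i.trans hii) hiT)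
      have hble : F (((i:ℝ)+1) * (T/n)) ≤ F 0 := hFanti 0 _ le_rfl (h0i.trans hii)
      have hab := hstep ((i:ℝ)*(T/n)) (((i:ℝ)+1)*(T/n)) h0i hii
      rw [show ((i:ℝ)+1)*(T/n) - (i:ℝ)*(T/n) = T/n by ring] at hab
      have := komornik_step η k (T/n) (F ((i:ℝ)*(T/n))) (F (((i:ℝ)+1)*(T/n))) (F 0)
        hη hk hΔnn hbpos hble hab
      simp only [Nat.cast_add, Nat.cast_one]
      linarith
    have hlb := Finset.card_nsmul_le_sum (Finset.range n)
      (fun i => (fun j : ℕ => F (j * (T/n)) ^ (-η)) (i+1) - (fun j : ℕ => F (j * (T/n)) ^ (-η)) i)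
      (η*k*(T/n) - (η*(1+η)*k^2*(F 0)^η)*(T/n)^2) step
    rw [Finset.sum_range_sub (fun j : ℕ => F (j * (T/n)) ^ (-η)) n] at hlb
    simp only [Finset.card_range, nsmul_eq_mul] at hlb
    rw [show (n:ℝ) * ((T/n)) = T from by field_simp] at hlb
    simp only [Nat.cast_zero, zero_mul] at hlb
    have harith : (n:ℝ) * (η*k*(T/n) - (η*(1+η)*k^2*(F 0)^η)*(T/n)^2)
        = η*k*T - (η*(1+η)*k^2*(F 0)^η)*T^2/n := by field_simp
    rw [harith] at hlb
    linarith
  have htend : Filter.Tendsto (fun n : ℕ => F 0 ^ (-η) + η*k*T - (η*(1+η)*k^2*(F 0)^η)*T^2/n)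
      Filter.atTop (nhds (F 0 ^ (-η) + η*k*T - 0)) :=
    Filter.Tendsto.sub tendsto_const_nhds (tendsto_const_div_atTop_nhds_zero_nat _)
  have := le_of_tendsto htend (Filter.eventually_atTop.2 ⟨1, fun n hn => key n hn⟩)
  linarith

/-- Lemma 2.3, case `η > 0` (Komornik): if `R : [0,∞) → [0,∞)` is non-increasing,
`η, C > 0`, and `∫_t^∞ R^(1+η) ≤ (1/C) * R 0 ^ η * R t` for all `t ≥ 0`, then
`R t ≤ R 0 * ((1+η)/(1+η*C*t))^(1/η)` for all `t ≥ 0`. -/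
theorem komornik_polynomial_decay (R : ℝ → ℝ) (η C : ℝ) (hη : 0 < η) (hC : 0 < C)
    (hnonneg : ∀ t, 0 ≤ t → 0 ≤ R t)
    (hanti : ∀ s t, 0 ≤ s → s ≤ t → R t ≤ R s)
    (hint : ∀ t, 0 ≤ t → IntegrableOn (fun τ => R τ ^ (1 + η)) (Set.Ici t))
    (hineq : ∀ t, 0 ≤ t → (∫ τ in Set.Ici t, R τ ^ (1 + η)) ≤ (1 / C) * R 0 ^ η * R t) :
    ∀ t, 0 ≤ t → R t ≤ R 0 * ((1 + η) / (1 + η * C * t)) ^ (1 / η) := by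
  intro t ht
  have hR0 : 0 ≤ R 0 := hnonneg 0 le_rfl
  set D : ℝ := (1 + η) / (1 + η * C * t) with hD
  have hden : (0:ℝ) < 1 + η * C * t := by
    have : 0 ≤ η*C*t := by positivity
    linarith
  have hDpos : (0:ℝ) < (1 + η) / (1 + η * C * t) := by positivity
  have hDnn : (0:ℝ) ≤ ((1 + η) / (1 + η * C * t)) ^ (1/η) := Real.rpow_nonneg hDpos.le _
  rcases eq_or_lt_of_le hR0 with h0 | hR0pos
  · have h1 : R t ≤ R 0 := hanti 0 t le_rfl ht
    calc R t ≤ R 0 := h1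
      _ = 0 := h0.symm
      _ ≤ R 0 * ((1 + η) / (1 + η * C * t)) ^ (1/η) := by
          rw [← h0]; simp
  by_cases hct : C * t ≤ 1
  · have h1 : (1:ℝ) ≤ (1+η)/(1+η*C*t) := by
      rw [le_div_iff₀ hden]; nlinarith
    have h2 : (1:ℝ) ≤ ((1+η)/(1+η*C*t)) ^ (1/η) := Real.one_le_rpow h1 (by positivity)
    calc R t ≤ R 0 := hanti 0 t le_rfl ht
      _ ≤ R 0 * _ := le_mul_of_one_le_right hR0 h2
  push_neg at hct
  -- Setup
  set g : ℝ → ℝ := fun τ => R τ ^ (1 + η) with hg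
  set F : ℝ → ℝ := fun u => ∫ τ in Set.Ici u, g τ with hF
  have hgnn : ∀ τ, 0 ≤ τ → 0 ≤ g τ := fun τ hτ => Real.rpow_nonneg (hnonneg τ hτ) _
  have hFnn : ∀ u, 0 ≤ u → 0 ≤ F u := by
    intro u hu
    exact setIntegral_nonneg measurableSet_Ici (fun τ hτ => hgnn τ (hu.trans hτ))
  have hsplit : ∀ s u, 0 ≤ s → s ≤ u → F s = (∫ τ in Set.Ico s u, g τ) + F u := by
    intro s u hs hsu
    rw [hF]
    rw [← setIntegral_union (by
        rw [Set.disjoint_left]; rintro x hx hx'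
        exact absurd hx' (not_le.2 hx.2))
      measurableSet_Ici ((hint s hs).mono_set Set.Ico_subset_Ici_self) (hint u (hs.trans hsu)),
      Set.Ico_union_Ici_eq_Ici hsu]
  have hlow : ∀ s u c, 0 ≤ s → s ≤ u → (∀ τ ∈ Set.Ico s u, c ≤ g τ) →
      c * (u - s) ≤ ∫ τ in Set.Ico s u, g τ := by
    intro s u c hs hsu hc
    have h := setIntegral_ge_of_const_le_real measurableSet_Ico
      (by rw [Real.volume_Ico]; exact ENNReal.ofReal_ne_top) hc
      ((hint s hs).mono_set Set.Ico_subset_Ici_self)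
    rwa [measureReal_def, Real.volume_Ico, ENNReal.toReal_ofReal (by linarith)] at h
  have hFanti : ∀ s u, 0 ≤ s → s ≤ u → F u ≤ F s := by
    intro s u hs hsu
    rw [hsplit s u hs hsu]
    have : 0 ≤ ∫ τ in Set.Ico s u, g τ :=
      setIntegral_nonneg measurableSet_Ico (fun τ hτ => hgnn τ (hs.trans hτ.1))
    linarith
  have hR0η : 0 < R 0 ^ η := Real.rpow_pos_of_pos hR0pos η
  set k : ℝ := (C / R 0 ^ η) ^ (1+η) with hk
  have hkpos : 0 < k := Real.rpow_pos_of_pos (by positivity) _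
  have hstep : ∀ s u, 0 ≤ s → s ≤ u → F u + k*(u-s)*F u^(1+η) ≤ F s := by
    intro s u hs hsu
    rw [hsplit s u hs hsu]
    have hFu : 0 ≤ F u := hFnn u (hs.trans hsu)
    have key : k * F u^(1+η) * (u-s) ≤ ∫ τ in Set.Ico s u, g τ := by
      apply hlow s u _ hs hsu
      intro τ hτ
      have hτ0 : 0 ≤ τ := hs.trans hτ.1
      have h1 : C / R 0^η * F u ≤ R τ := by
        have h2 : F τ ≤ 1/C * R 0^η * R τ := hineq τ hτ0
        have h3 : F u ≤ F τ := hFanti τ u hτ0 hτ.2.le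
        rw [div_mul_eq_mul_div, div_le_iff₀ hR0η]
        have h4 := mul_le_mul_of_nonneg_left (h3.trans h2) hC.le
        calc C * F u ≤ C * (1/C * R 0^η * R τ) := h4
          _ = R τ * R 0^η := by field_simp
      have h2 : (C / R 0^η * F u) ^ (1+η) ≤ R τ ^ (1+η) :=
        Real.rpow_le_rpow (by positivity) h1 (by linarith)
      rw [Real.mul_rpow (by positivity) hFu] at h2
      exact h2
    linarith
  -- choose s
  set s : ℝ := (C*t - 1)/(C*(1+η)) with hs
  have hs0 : 0 ≤ s := div_nonneg (by linarith) (by positivity)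
  have hst : s < t := by
    rw [hs, div_lt_iff₀ (by positivity)]; nlinarith
  have hRt : R t ^ (1+η) * (t - s) ≤ F s := by
    have h1 := hlow s t (R t^(1+η)) hs0 hst.le (fun τ hτ =>
      Real.rpow_le_rpow (hnonneg t ht) (hanti τ t (hs0.trans hτ.1) hτ.2.le) (by linarith))
    have h2 := hsplit s t hs0 hst.le
    have h3 := hFnn t ht
    linarith
  rcases (hFnn s hs0).eq_or_lt with hFs0 | hFs
  · -- F s = 0, so R t = 0
    have h1 : R t ^ (1+η) * (t - s) ≤ 0 := by rw [← hFs0] at hRt; exact hRt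
    have h2 : R t ^ (1+η) ≤ 0 := by
      by_contra h
      push_neg at h
      nlinarith
    have h3 : R t = 0 := by
      by_contra h
      have : 0 < R t := lt_of_le_of_ne (hnonneg t ht) (Ne.symm h)
      exact absurd (Real.rpow_pos_of_pos this (1+η)) (not_lt.2 h2)
    rw [h3]; positivity
  · -- main case
    have hcore := komornik_core F η k hη hkpos hFnn hstep s hs0 hFs
    have hF0pos : 0 < F 0 := lt_of_lt_of_le hFs (hFanti 0 s le_rfl hs0)
    have hBpos : (0:ℝ) < 1/C * R 0^η * R 0 := by positivity
    have hA : (1/C * R 0^η * R 0) ^ (-η) ≤ F 0 ^ (-η) :=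
      Real.rpow_le_rpow_of_nonpos hF0pos (hineq 0 le_rfl) (by linarith)
    have hW : (1/C * R 0^η * R 0) ^ (-η) + η*k*s ≤ F s ^ (-η) := by linarith
    -- final algebra
    set G : ℝ := R 0 * ((1 + η) / (1 + η * C * t)) ^ (1/η) with hG
    have hGpos : 0 < G := by positivity
    have hfin : ((t - s) * G^(1+η)) ^ (-η) = (1/C * R 0^η * R 0) ^ (-η) + η*k*s := by
      set P : ℝ := R 0 with hP
      set Q : ℝ := (P^(1+η)) ^ (-η) with hQ
      have hPpos : 0 < P := hR0pos
      have hP1η : 0 < P^(1+η) := Real.rpow_pos_of_pos hPpos _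
      have hQpos : 0 < Q := Real.rpow_pos_of_pos hP1η _
      have hη1 : (0:ℝ) < 1 + η := by linarith
      have eDinv : D⁻¹ = (1+η*C*t)/(1+η) := by rw [hD, inv_div]
      have ets : t - s = D⁻¹ / C := by
        rw [eDinv, hs]; field_simp; ring
      have eG : G^(1+η) = P^(1+η) * D^((1/η)*(1+η)) := by
        rw [hG, Real.mul_rpow hPpos.le (Real.rpow_nonneg hDpos.le _),
          ← Real.rpow_mul hDpos.le]
      have eDD : D ^ ((1/η)*(1+η)) * D ^ (-1:ℝ) = D ^ (1/η) := by
        rw [← Real.rpow_add hDpos]; congr 1; field_simp; ring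
      have e3 : (t-s) * G^(1+η) = P^(1+η) * D^(1/η) / C := by
        rw [ets, eG, show (D:ℝ)⁻¹ = D^(-1:ℝ) by rw [Real.rpow_neg_one]]
        calc D^(-1:ℝ)/C * (P^(1+η) * D^((1/η)*(1+η)))
            = P^(1+η) * (D^((1/η)*(1+η)) * D^(-1:ℝ))/C := by ring
          _ = P^(1+η) * D^(1/η)/C := by rw [eDD]
      have e5 : (D^(1/η))^(-η) = D⁻¹ := by
        rw [← Real.rpow_mul hDpos.le, show (1/η)*(-η) = -1 by field_simp, Real.rpow_neg_one]
      have e4 : ((t-s) * G^(1+η))^(-η) = Q * D⁻¹ * C^η := by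
        rw [e3, Real.div_rpow (by positivity) hC.le,
          Real.mul_rpow hP1η.le (Real.rpow_nonneg hDpos.le _), e5,
          Real.rpow_neg hC.le, ← hQ]
        field_simp
      have eb : 1/C * P^η * P = P^(1+η)/C := by
        rw [Real.rpow_add hPpos, Real.rpow_one]; ring
      have eA : (1/C * P^η * P)^(-η) = C^η * Q := by
        rw [eb, Real.div_rpow hP1η.le hC.le, Real.rpow_neg hC.le, ← hQ]
        field_simp
      have eQ2 : Q = (P^(η*(1+η)))⁻¹ := by
        rw [hQ, ← Real.rpow_mul hPpos.le, show (1+η)*(-η) = -(η*(1+η)) by ring,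
          Real.rpow_neg hPpos.le]
      have ek : k = C*C^η*Q := by
        rw [hk, Real.div_rpow hC.le (Real.rpow_nonneg hPpos.le _),
          ← Real.rpow_mul hPpos.le, show (C:ℝ)^(1+η) = C^(1:ℝ)*C^η from Real.rpow_add hC 1 η,
          Real.rpow_one, eQ2, div_eq_mul_inv]
      have es : 1 + η*C*s = D⁻¹ := by
        rw [eDinv, hs]; field_simp; ring
      rw [e4, eA, ek, ← es]
      ring
    have h5 : ((t - s) * G^(1+η)) ^ (-η) ≤ F s ^ (-η) := by rw [hfin]; exact hW
    have h6 : F s ≤ (t - s) * G^(1+η) := by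
      have hts : (0:ℝ) < (t-s) * G^(1+η) := by
        have := Real.rpow_pos_of_pos hGpos (1+η)
        nlinarith
      exact (Real.rpow_le_rpow_iff_of_neg hts hFs (by linarith)).1 h5
    have h7 : R t ^ (1+η) ≤ G ^ (1+η) := by
      have hts : (0:ℝ) < t - s := by linarith
      have h8 := hRt.trans h6
      have h9 : R t ^ (1+η) ≤ (t-s) * G^(1+η) / (t-s) := (le_div_iff₀ hts).2 (by linarith)
      calc R t ^ (1+η) ≤ (t-s) * G^(1+η) / (t-s) := h9
        _ = G^(1+η) := by field_simp
    calc R t = (R t ^ (1+η)) ^ (1/(1+η)) := by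
          rw [← Real.rpow_mul (hnonneg t ht), mul_one_div, div_self (by linarith), Real.rpow_one]
      _ ≤ (G ^ (1+η)) ^ (1/(1+η)) :=
          Real.rpow_le_rpow (Real.rpow_nonneg (hnonneg t ht) _) h7 (by positivity)
      _ = G := by
          rw [← Real.rpow_mul hGpos.le, mul_one_div, div_self (by linarith), Real.rpow_one]
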